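/- Let t₀ < t₁ and α, β ∈ ℝ. Let f : ℝ×ℝ×ℝ → ℝ be continuous, h : ℝ → ℝ continuous on [t₀,t₁], φ : ℝ×ℝ → ℝ continuously differentiable, and ℓ₀, ℓ₁ ∈ ℝ. Suppose (i) f(x,y,z) + Dφ(x,y,z) ≥ h(x) for every x ∈ [t₀,t₁] and all y, z ∈ ℝ, (ii) φ(t₀,α) ≥ ℓ₀, and (iii) −φ(t₁,β) ≥ ℓ₁. Then every continuously differentiable u : ℝ → ℝ with u(t₀) = α and u(t₁) = β satisfies ∫_{t₀}^{t₁} f(x, u(x), u'(x)) dx ≥ ∫_{t₀}^{t₁} h(x) dx + ℓ₀ + ℓ₁. -/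

import Mathlib

open Real MeasureTheory Set

theorem stmt_1
    (t₀ t₁ : ℝ) (ht : t₀ < t₁) (α β : ℝ)
    (f : ℝ → ℝ → ℝ → ℝ) (hf : Continuous fun p : ℝ × ℝ × ℝ => f p.1 p.2.1 p.2.2)
    (h : ℝ → ℝ) (hh : ContinuousOn h (Icc t₀ t₁))
    (φ : ℝ → ℝ → ℝ) (hφ : ContDiff ℝ 1 fun p : ℝ × ℝ => φ p.1 p.2)
    (ℓ₀ ℓ₁ : ℝ)
    (hpoint : ∀ x ∈ Icc t₀ t₁, ∀ y z : ℝ,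
      f x y z + deriv (fun s => φ s y) x + deriv (fun t => φ x t) y * z ≥ h x)
    (hbd0 : φ t₀ α ≥ ℓ₀) (hbd1 : -φ t₁ β ≥ ℓ₁)
    (u : ℝ → ℝ) (hu : ContDiff ℝ 1 u) (hu0 : u t₀ = α) (hu1 : u t₁ = β) :
    (∫ x in t₀..t₁, f x (u x) (deriv u x)) ≥ (∫ x in t₀..t₁, h x) + ℓ₀ + ℓ₁ := by
  set Φ : ℝ × ℝ → ℝ := fun p => φ p.1 p.2 with hΦ
  have hΦdiff : Differentiable ℝ Φ := hφ.differentiable one_ne_zero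
  have hudiff : Differentiable ℝ u := hu.differentiable one_ne_zero
  have hu' : Continuous (deriv u) := hu.continuous_deriv le_rfl
  set G : ℝ → ℝ := fun x => (fderiv ℝ Φ (x, u x)) (1, deriv u x) with hG
  -- G is the derivative of x ↦ φ x (u x)
  have hgd : ∀ x : ℝ, HasDerivAt (fun x => φ x (u x)) (G x) x := by
    intro x
    have h1 : HasDerivAt (fun x : ℝ => (x, u x)) ((1 : ℝ), deriv u x) x :=
      HasDerivAt.prodMk (hasDerivAt_id x) (hudiff x).hasDerivAt
    exact ((hΦdiff (x, u x)).hasFDerivAt).comp_hasDerivAt x h1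
  -- partial derivatives
  have hpartx : ∀ x y : ℝ, deriv (fun s => φ s y) x = fderiv ℝ Φ (x, y) (1, 0) := by
    intro x y
    have h1 : HasDerivAt (fun s : ℝ => (s, y)) ((1 : ℝ), (0 : ℝ)) x :=
      HasDerivAt.prodMk (hasDerivAt_id x) (hasDerivAt_const x y)
    exact (((hΦdiff (x, y)).hasFDerivAt).comp_hasDerivAt x h1).deriv
  have hparty : ∀ x y : ℝ, deriv (fun t => φ x t) y = fderiv ℝ Φ (x, y) (0, 1) := by
    intro x y
    have h1 : HasDerivAt (fun t : ℝ => (x, t)) ((0 : ℝ), (1 : ℝ)) y :=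
      HasDerivAt.prodMk (hasDerivAt_const y x) (hasDerivAt_id y)
    exact (((hΦdiff (x, y)).hasFDerivAt).comp_hasDerivAt y h1).deriv
  have hGeq : ∀ x : ℝ,
      G x = deriv (fun s => φ s (u x)) x + deriv (fun t => φ x t) (u x) * deriv u x := by
    intro x
    rw [hpartx, hparty]
    have : ((1 : ℝ), deriv u x) = (1, 0) + deriv u x • ((0 : ℝ), (1 : ℝ)) := by
      simp [Prod.ext_iff]
    rw [hG]
    simp only [this, map_add, ContinuousLinearMap.map_smul, smul_eq_mul]
    ring
  -- continuity of relevant functions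
  have hGcont : Continuous G := by
    have hfd : Continuous (fderiv ℝ Φ) := (contDiff_one_iff_fderiv.mp hφ).2
    exact (hfd.comp (continuous_id.prodMk hudiff.continuous)).clm_apply
      (continuous_const.prodMk hu')
  have hFcont : Continuous fun x => f x (u x) (deriv u x) :=
    hf.comp (continuous_id.prodMk (hudiff.continuous.prodMk hu'))
  -- FTC for G
  have hFTC : (∫ x in t₀..t₁, G x) = φ t₁ β - φ t₀ α := by
    have := intervalIntegral.integral_eq_sub_of_hasDerivAt
      (f := fun x => φ x (u x)) (f' := G)
      (fun x _ => hgd x) (hGcont.intervalIntegrable t₀ t₁)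
    rw [this]
    show φ t₁ (u t₁) - φ t₀ (u t₀) = _
    rw [hu0, hu1]
  -- pointwise bound
  have hpt : ∀ x ∈ Icc t₀ t₁, h x ≤ f x (u x) (deriv u x) + G x := by
    intro x hx
    have := hpoint x hx (u x) (deriv u x)
    rw [hGeq x]; linarith
  have hintF : IntervalIntegrable (fun x => f x (u x) (deriv u x)) volume t₀ t₁ :=
    hFcont.intervalIntegrable t₀ t₁
  have hintG : IntervalIntegrable G volume t₀ t₁ := hGcont.intervalIntegrable t₀ t₁
  have hmono : (∫ x in t₀..t₁, h x) ≤ ∫ x in t₀..t₁, (f x (u x) (deriv u x) + G x) :=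
    intervalIntegral.integral_mono_on ht.le
      (hh.intervalIntegrable_of_Icc ht.le) (hintF.add hintG) hpt
  rw [intervalIntegral.integral_add hintF hintG, hFTC] at hmono
  linarith
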